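/- It is impossible to construct a time integrator of order greater than or equal to 2 using real-valued forward Euler time steps of variable sizes. Precisely: for every n ≥ 1 and every tuple of real numbers w_1, …, w_n with w_1 + ⋯ + w_n = 1, the local error function Δt ↦ ∏_{i=1}^n (1 + w_i·Δt) − e^{Δt} is NOT o(Δt²) as Δt → 0; that is, it is false that lim_{Δt→0} (∏_{i=1}^n (1 + w_i Δt) − e^{Δt})/Δt² = 0. -/

import Mathlib

open Filter Topology

private theorem euler_coeffs_prod {ι : Type*} [DecidableEq ι] (w : ι → ℝ) (s : Finset ι) :
    (∏ i ∈ s, (Polynomial.C (w i) * Polynomial.X + 1)).coeff 0 = 1 ∧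
    (∏ i ∈ s, (Polynomial.C (w i) * Polynomial.X + 1)).coeff 1 = ∑ i ∈ s, w i ∧
    2 * (∏ i ∈ s, (Polynomial.C (w i) * Polynomial.X + 1)).coeff 2
      = (∑ i ∈ s, w i) ^ 2 - ∑ i ∈ s, (w i) ^ 2 := by
  open Polynomial in
  induction s using Finset.induction with
  | empty => simp [Polynomial.coeff_one]
  | @insert a s ha ih =>
    obtain ⟨h0, h1, h2⟩ := ih
    set P := ∏ i ∈ s, (C (w i) * X + 1) with hP
    have key : ∏ i ∈ insert a s, (C (w i) * X + 1) = C (w a) * (X * P) + P := by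
      rw [Finset.prod_insert ha]; ring
    have e0 : (X * P).coeff 0 = 0 := by simp
    have e1 : (X * P).coeff 1 = P.coeff 0 := coeff_X_mul P 0
    have e2 : (X * P).coeff 2 = P.coeff 1 := coeff_X_mul P 1
    rw [key]
    simp only [coeff_add, coeff_C_mul, e0, e1, e2, h0, h1, Finset.sum_insert ha]
    exact ⟨by ring, by ring, by nlinarith [h2]⟩

private theorem euler_exp_taylor2 :
    Tendsto (fun t : ℝ => (Real.exp t - 1 - t) / t ^ 2) (𝓝[≠] (0:ℝ)) (𝓝 (1/2)) := by
  rw [← tendsto_sub_nhds_zero_iff]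
  apply squeeze_zero_norm' (a := fun t : ℝ => (2/9) * |t|)
  · filter_upwards [self_mem_nhdsWithin,
      nhdsWithin_le_nhds (Metric.ball_mem_nhds (0:ℝ) one_pos)] with t ht ht1
    have htne : t ≠ 0 := ht
    have htle : |t| ≤ 1 := le_of_lt (by simpa [Real.dist_eq] using ht1)
    have hb := Real.exp_bound htle (n := 3) (by norm_num)
    have hsum : ∑ m ∈ Finset.range 3, t ^ m / (Nat.factorial m) = 1 + t + t^2/2 := by
      simp [Finset.sum_range_succ, Nat.factorial]
    rw [hsum] at hb
    have ht2 : t^2 ≠ 0 := pow_ne_zero _ htne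
    have : (Real.exp t - 1 - t) / t ^ 2 - 1/2
        = (Real.exp t - (1 + t + t^2/2)) / t^2 := by field_simp; ring
    rw [Real.norm_eq_abs, this, abs_div, abs_pow]
    rw [div_le_iff₀ (by positivity)]
    calc |Real.exp t - (1 + t + t^2/2)| ≤ |t|^3 * (4 / (6 * 3)) := by
          convert hb using 2 <;> norm_num [Nat.factorial]
      _ ≤ 2/9 * |t| * |t|^2 := by ring_nf; rfl
  · have : Tendsto (fun t : ℝ => (2/9) * |t|) (𝓝 0) (𝓝 ((2/9) * |(0:ℝ)|)) :=
      (continuous_const.mul continuous_abs).tendsto 0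
    simpa using this.mono_left nhdsWithin_le_nhds

/-- It is impossible to construct a time integrator of order ≥ 2 using real-valued
forward Euler time steps of variable sizes: for every `n ≥ 1` and real step fractions
`w 1, …, w n` summing to `1`, the local error
`Δt ↦ ∏ i, (1 + w i * Δt) − exp Δt` is not `o(Δt²)` as `Δt → 0`. -/
theorem no_second_order_real_euler_path (n : ℕ) (hn : 1 ≤ n) (w : Fin n → ℝ)
    (hsum : ∑ i, w i = 1) :
    ¬ Tendsto (fun Δt : ℝ => ((∏ i, (1 + w i * Δt)) - Real.exp Δt) / Δt ^ 2)
      (𝓝[≠] (0 : ℝ)) (𝓝 0) := by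
  open Polynomial in
  intro H
  set P : ℝ[X] := ∏ i, (C (w i) * X + 1) with hPdef
  obtain ⟨h0, h1, h2⟩ := euler_coeffs_prod w Finset.univ
  rw [hsum] at h1 h2
  -- P.eval t = ∏ (1 + w i t)
  have hPeval : ∀ t : ℝ, P.eval t = ∏ i, (1 + w i * t) := by
    intro t
    rw [hPdef, Polynomial.eval_prod]
    exact Finset.prod_congr rfl fun i _ => by simp [add_comm]
  -- Q := P - 1 - X is divisible by X²
  set Q : ℝ[X] := P - 1 - X with hQdef
  have hQ0 : Q.coeff 0 = 0 := by simp [hQdef, hPdef, h0, Polynomial.coeff_one]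
  have hQ1 : Q.coeff 1 = 0 := by simp [hQdef, hPdef, h1, Polynomial.coeff_one]
  have hdvd : (X : ℝ[X]) ^ 2 ∣ Q := by
    rw [Polynomial.X_pow_dvd_iff]
    intro d hd
    interval_cases d
    · exact hQ0
    · exact hQ1
  obtain ⟨R, hR⟩ := hdvd
  have hQ2 : Q.coeff 2 = R.coeff 0 := by
    rw [hR]
    simpa using Polynomial.coeff_X_pow_mul R 2 0
  have hP2Q : Q.coeff 2 = P.coeff 2 := by simp [hQdef, Polynomial.coeff_one, Polynomial.coeff_X]
  -- the combined limit
  have Hsum : Tendsto (fun t : ℝ => (P.eval t - 1 - t) / t ^ 2)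
      (𝓝[≠] (0:ℝ)) (𝓝 (0 + 1/2)) := by
    have := (H.add euler_exp_taylor2)
    refine this.congr fun t => ?_
    rw [← add_div, hPeval t]
    ring_nf
    simp only [mul_comm (w _) t]; ring
  -- the same function equals R.eval, which tends to R.coeff 0
  have HR : Tendsto (fun t : ℝ => (P.eval t - 1 - t) / t ^ 2)
      (𝓝[≠] (0:ℝ)) (𝓝 (R.coeff 0)) := by
    have hcont : Tendsto (fun t : ℝ => R.eval t) (𝓝[≠] (0:ℝ)) (𝓝 (R.eval 0)) :=
      (R.continuous_aeval.tendsto 0).mono_left nhdsWithin_le_nhds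
    rw [show R.eval 0 = R.coeff 0 by simp [Polynomial.eval_zero, Polynomial.coeff_zero_eq_eval_zero]] at hcont
    refine hcont.congr' ?_
    filter_upwards [self_mem_nhdsWithin] with t ht
    have htne : (t : ℝ) ≠ 0 := ht
    have : P.eval t - 1 - t = t ^ 2 * R.eval t := by
      have := congrArg (Polynomial.eval t) hR
      simpa [hQdef] using this
    rw [this]
    field_simp
  have heq : R.coeff 0 = 0 + 1/2 := tendsto_nhds_unique HR Hsum
  -- conclude ∑ w² = 0, contradiction
  have hsq : ∑ i, (w i) ^ 2 = 0 := by
    have : P.coeff 2 = 1/2 := by rw [← hP2Q, hQ2, heq]; ring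
    nlinarith [h2]
  have hall : ∀ i ∈ Finset.univ, w i = 0 := by
    intro i hi
    have := (Finset.sum_eq_zero_iff_of_nonneg (fun j _ => sq_nonneg (w j))).1 hsq i hi
    exact pow_eq_zero_iff (by norm_num) |>.1 this
  have : (1:ℝ) = 0 := by
    rw [← hsum]
    exact Finset.sum_eq_zero hall
  norm_num at this
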